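/- Let G be a k-regular graph on n vertices, let E_i be an eigenspace of its adjacency matrix, and let U ⊆ V. If I_U E_i is not contained in j^⊥, then the main angle β_i of I_U E_i satisfies 1/(n β_i²) = min{ vᵀ v : v ∈ E_i, vᵀ (I_U j) = 1 }. -/

import Mathlib

open Matrix

/-- The eigenspace of a real matrix `A` (acting by `mulVec`) for the value `μ`. -/
noncomputable def eigSp {V : Type*} [Fintype V] [DecidableEq V]
    (A : Matrix V V ℝ) (μ : ℝ) : Submodule ℝ (V → ℝ) :=
  Module.End.eigenspace (Matrix.mulVecLin A) μ

/-- The switching matrix `I_U`: diagonal with entry `−1` on `U` and `+1` off `U`. -/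
noncomputable def switchMat {V : Type*} [Fintype V] [DecidableEq V]
    (U : Finset V) : Matrix V V ℝ :=
  Matrix.diagonal (fun v => if v ∈ U then -1 else 1)

/-- The main angle of a subspace `W` of `ℝ^V`: `(1/√n)‖P j‖`, where `P` is the
orthogonal projection onto `W` and `j` is the all-ones vector. -/
noncomputable def mainAngle {V : Type*} [Fintype V] [DecidableEq V]
    (W : Submodule ℝ (V → ℝ)) : ℝ :=
  (1 / Real.sqrt (Fintype.card V)) *
    ‖(Submodule.orthogonalProjection (W.map ((WithLp.linearEquiv 2 ℝ (V → ℝ)).symm.toLinearMap)))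
      ((WithLp.linearEquiv 2 ℝ (V → ℝ)).symm (fun _ => 1))‖

set_option linter.unusedSectionVars false
section helpers
variable {V : Type*} [Fintype V] [DecidableEq V] (U : Finset V)

lemma switch_mulVec (x : V → ℝ) (i : V) :
    (switchMat U).mulVec x i = (if i ∈ U then -1 else 1) * x i := by
  simp [switchMat, Matrix.mulVec_diagonal]

lemma switch_invol (x : V → ℝ) :
    (switchMat U).mulVec ((switchMat U).mulVec x) = x := by
  funext i; simp only [switch_mulVec]; split_ifs <;> ring

lemma dot_switch (x y : V → ℝ) :
    ((switchMat U).mulVec x) ⬝ᵥ ((switchMat U).mulVec y) = x ⬝ᵥ y := by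
  simp only [dotProduct, switch_mulVec]
  refine Finset.sum_congr rfl fun i _ => by split_ifs <;> ring

lemma dot_switch_right (x y : V → ℝ) :
    x ⬝ᵥ ((switchMat U).mulVec y) = ((switchMat U).mulVec x) ⬝ᵥ y := by
  simp only [dotProduct, switch_mulVec]
  refine Finset.sum_congr rfl fun i _ => by split_ifs <;> ring

lemma inner_symm_eq_dot (x y : V → ℝ) :
    (inner ℝ ((WithLp.linearEquiv 2 ℝ (V → ℝ)).symm x)
      ((WithLp.linearEquiv 2 ℝ (V → ℝ)).symm y) : ℝ) = x ⬝ᵥ y := by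
  simp [PiLp.inner_apply, RCLike.inner_apply, dotProduct, mul_comm]

end helpers

/-- for a `k`-regular graph on `n` vertices, an eigenspace `E_i` of its
adjacency matrix and `U ⊆ V`, if `I_U E_i ⊄ j^⊥` then the main angle `β_i` of `I_U E_i`
satisfies `1/(n β_i²) = min { vᵀv : v ∈ E_i, vᵀ (I_U j) = 1 }`. -/
theorem stmt5 {V : Type*} [Fintype V] [DecidableEq V]
    (G : SimpleGraph V) [DecidableRel G.Adj] (k : ℕ)
    (hreg : G.IsRegularOfDegree k)
    (A : Matrix V V ℝ) (hA : A = G.adjMatrix ℝ)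
    (μ : ℝ) (hμ : eigSp A μ ≠ ⊥)
    (U : Finset V)
    (hmain : ¬ (∀ w ∈ Submodule.map (Matrix.mulVecLin (switchMat U)) (eigSp A μ),
      w ⬝ᵥ (fun _ => (1 : ℝ)) = 0)) :
    IsLeast {x : ℝ | ∃ v ∈ eigSp A μ,
        v ⬝ᵥ ((switchMat U).mulVec (fun _ => 1)) = 1 ∧ v ⬝ᵥ v = x}
      (1 / ((Fintype.card V : ℝ) *
        (mainAngle (Submodule.map (Matrix.mulVecLin (switchMat U)) (eigSp A μ))) ^ 2)) := by
  classical
  set e := WithLp.linearEquiv 2 ℝ (V → ℝ) with he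
  set E := eigSp A μ with hE
  set W := E.map (Matrix.mulVecLin (switchMat U)) with hW
  set K := W.map e.symm.toLinearMap with hK
  set j : V → ℝ := fun _ => 1 with hj
  set j' : EuclideanSpace ℝ V := e.symm j with hj'
  set p : EuclideanSpace ℝ V := (Submodule.orthogonalProjection K j' : EuclideanSpace ℝ V) with hp
  -- membership in K
  have memK : ∀ x : EuclideanSpace ℝ V, x ∈ K ↔ ∃ w ∈ W, e.symm w = x := by
    intro x
    constructor
    · intro h
      exact ⟨e x, by simpa [hK] using h, by simp⟩
    · rintro ⟨w, hw, rfl⟩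
      exact ⟨w, hw, rfl⟩
  have hpK : p ∈ K := (Submodule.orthogonalProjection K j').2
  -- projection property: for u ∈ K, ⟪u, j'⟫ = ⟪u, p⟫
  have proj : ∀ u : EuclideanSpace ℝ V, u ∈ K → (inner ℝ u j' : ℝ) = inner ℝ u p := by
    intro u hu
    have h := Submodule.starProjection_inner_eq_zero (K := K) j' u hu
    have h2 : (inner ℝ u (j' - p) : ℝ) = 0 := by rw [real_inner_comm]; exact h
    rw [inner_sub_right] at h2
    linarith
  -- p ≠ 0
  have hp0 : p ≠ 0 := by
    push_neg at hmain
    obtain ⟨w, hw, hwj⟩ := hmain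
    intro h0
    have h1 : (inner ℝ (e.symm w : EuclideanSpace ℝ V) j' : ℝ) = w ⬝ᵥ j :=
      inner_symm_eq_dot w j
    have h2 := proj (e.symm w) ((memK _).mpr ⟨w, hw, rfl⟩)
    rw [h0, inner_zero_right, h1] at h2
    exact hwj h2
  have hpnorm : (0:ℝ) < ‖p‖ := norm_pos_iff.mpr hp0
  -- ⟪p, j'⟫ = ‖p‖^2
  have hpj : (inner ℝ p j' : ℝ) = ‖p‖ ^ 2 := by
    rw [proj p hpK, real_inner_self_eq_norm_sq]
  -- n > 0
  have hn : (0:ℝ) < (Fintype.card V : ℝ) := by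
    rcases isEmpty_or_nonempty V with h | h
    · exfalso
      exact hμ (Subsingleton.elim _ _)
    · exact_mod_cast Fintype.card_pos
  -- the constant equals 1/‖p‖²
  have hβ : (1 / ((Fintype.card V : ℝ) *
      (mainAngle W) ^ 2)) = 1 / ‖p‖ ^ 2 := by
    have : mainAngle W = (1 / Real.sqrt (Fintype.card V)) * ‖p‖ := by
      rw [mainAngle]
      congr 1
    rw [this, mul_pow, div_pow, one_pow, Real.sq_sqrt hn.le]
    field_simp
  rw [hβ]
  -- obtain w₀ ∈ W with e.symm w₀ = p, and u ∈ E with I_U u = w₀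
  obtain ⟨w₀, hw₀W, hw₀⟩ := (memK p).mp hpK
  obtain ⟨u, huE, huw⟩ := Submodule.mem_map.mp hw₀W
  constructor
  · -- membership: v₀ = (‖p‖^2)⁻¹ • u
    refine ⟨(‖p‖ ^ 2)⁻¹ • u, Submodule.smul_mem _ _ huE, ?_, ?_⟩
    · have h1 : u ⬝ᵥ (switchMat U).mulVec j = w₀ ⬝ᵥ j := by
        rw [dot_switch_right, ← huw]; rfl
      have h2 : w₀ ⬝ᵥ j = ‖p‖ ^ 2 := by
        rw [← inner_symm_eq_dot, hw₀]; exact hpj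
      rw [smul_dotProduct, h1, h2, smul_eq_mul]
      field_simp
    · have h3 : u ⬝ᵥ u = ‖p‖ ^ 2 := by
        have : u ⬝ᵥ u = w₀ ⬝ᵥ w₀ := by
          rw [← dot_switch U u u, ← huw]; rfl
        rw [this, ← inner_symm_eq_dot, hw₀, real_inner_self_eq_norm_sq]
      rw [smul_dotProduct, dotProduct_smul, h3, smul_eq_mul, smul_eq_mul]
      field_simp
  · -- lower bound
    rintro x ⟨v, hvE, hv1, rfl⟩
    set w : V → ℝ := (switchMat U).mulVec v with hwdef
    have hwW : w ∈ W := ⟨v, hvE, rfl⟩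
    have h1 : (inner ℝ (e.symm w : EuclideanSpace ℝ V) j' : ℝ) = 1 := by
      rw [inner_symm_eq_dot]
      rw [hwdef]
      rw [← dot_switch_right]
      exact hv1
    have h2 : (inner ℝ (e.symm w : EuclideanSpace ℝ V) p : ℝ) = 1 := by
      rw [← proj _ ((memK _).mpr ⟨w, hwW, rfl⟩), h1]
    have hcs : (1:ℝ) ≤ ‖(e.symm w : EuclideanSpace ℝ V)‖ * ‖p‖ := by
      rw [← h2]; exact real_inner_le_norm _ _
    have h3 : v ⬝ᵥ v = ‖(e.symm w : EuclideanSpace ℝ V)‖ ^ 2 := by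
      rw [← real_inner_self_eq_norm_sq, inner_symm_eq_dot, hwdef, dot_switch]
    rw [h3]
    rw [div_le_iff₀ (by positivity)]
    nlinarith [norm_nonneg (e.symm w : EuclideanSpace ℝ V), hpnorm]
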